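/- Let V be a Schwartz function on ℝ² and for t ∈ ℝ define V(t, p₁, p₂) = exp(−it(p₁⁴ + 3p₂²)/p₁) · V(p₁, p₂) for p₁ ≠ 0. Then for each fixed t ≠ 0 and each Schwartz test function ψ of one variable, the function p₁ ↦ ∫_ℝ V(t,p₁,p₂) ψ(p₂) dp₂ tends to 0 as p₁ → 0. -/

import Mathlib

open MeasureTheory Filter Real

namespace Stmt12Aux

noncomputable def K (c p : ℝ) : ℂ := Complex.exp (((-(c * p ^ 2) : ℝ) : ℂ) * Complex.I)

lemma norm_K (c p : ℝ) : ‖K c p‖ = 1 := by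
  rw [K, Complex.norm_exp_ofReal_mul_I]

lemma K_neg (c p : ℝ) : K c (-p) = K c p := by simp [K]

lemma continuous_K (c : ℝ) : Continuous (K c) := by
  unfold K
  fun_prop

noncomputable def h₀ (g₀ : ℝ → ℂ) : ℝ → ℂ :=
  Set.indicator (Set.Ioi 0) fun u =>
    (((2 * Real.sqrt u : ℝ)) : ℂ)⁻¹ * (g₀ (Real.sqrt u) + g₀ (-Real.sqrt u))

lemma sq_image_Ioi : (fun x : ℝ => x ^ 2) '' Set.Ioi 0 = Set.Ioi 0 := by
  ext u
  constructor
  · rintro ⟨x, hx, rfl⟩; exact pow_pos (Set.mem_Ioi.mp hx) 2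
  · intro hu; exact ⟨Real.sqrt u, Real.sqrt_pos.mpr hu, Real.sq_sqrt hu.le⟩

lemma fourier_eq (g₀ : ℝ → ℂ)
    (hKg : ∀ c : ℝ, Integrable (fun p => K c p * g₀ p)) (c : ℝ) :
    FourierTransform.fourier (h₀ g₀) (c / (2 * π)) = ∫ p : ℝ, K c p * g₀ p := by
  rw [Real.fourier_real_eq_integral_exp_smul]
  have h1 : (fun v : ℝ => Complex.exp (((-2 * π * v * (c / (2 * π)) : ℝ) : ℂ) * Complex.I) • h₀ g₀ v)
      = Set.indicator (Set.Ioi 0) (fun u => Complex.exp (((-2 * π * u * (c / (2 * π)) : ℝ) : ℂ) * Complex.I) •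
          ((((2 * Real.sqrt u : ℝ)) : ℂ)⁻¹ * (g₀ (Real.sqrt u) + g₀ (-Real.sqrt u)))) := by
    funext u
    by_cases hu : u ∈ Set.Ioi (0:ℝ)
    · simp [h₀, Set.indicator_of_mem hu]
    · simp [h₀, Set.indicator_of_notMem hu]
  rw [h1, integral_indicator measurableSet_Ioi]
  have hder : ∀ x ∈ Set.Ioi (0:ℝ), HasDerivWithinAt (fun x : ℝ => x ^ 2) (2 * x) (Set.Ioi 0) x := by
    intro x _
    simpa using (hasDerivAt_pow 2 x).hasDerivWithinAt
  have hinj : Set.InjOn (fun x : ℝ => x ^ 2) (Set.Ioi 0) := by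
    intro a ha b hb hab
    simp only [Set.mem_Ioi] at ha hb
    have hab' : a ^ 2 = b ^ 2 := hab
    nlinarith
  have hcov := integral_image_eq_integral_abs_deriv_smul measurableSet_Ioi hder hinj
      (fun u => Complex.exp (((-2 * π * u * (c / (2 * π)) : ℝ) : ℂ) * Complex.I) •
          ((((2 * Real.sqrt u : ℝ)) : ℂ)⁻¹ * (g₀ (Real.sqrt u) + g₀ (-Real.sqrt u))))
  rw [sq_image_Ioi] at hcov
  rw [hcov]
  have h2 : Set.EqOn (fun x : ℝ => |2 * x| • (Complex.exp (((-2 * π * x ^ 2 * (c / (2 * π)) : ℝ) : ℂ) * Complex.I) •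
          ((((2 * Real.sqrt (x ^ 2) : ℝ)) : ℂ)⁻¹ * (g₀ (Real.sqrt (x ^ 2)) + g₀ (-Real.sqrt (x ^ 2))))))
      (fun x : ℝ => K c x * g₀ x + K c x * g₀ (-x)) (Set.Ioi 0) := by
    intro x hx
    simp only [Set.mem_Ioi] at hx
    have hsq : Real.sqrt (x ^ 2) = x := Real.sqrt_sq hx.le
    have hphase : ((-2 * π * x ^ 2 * (c / (2 * π)) : ℝ) : ℂ) = ((-(c * x ^ 2) : ℝ) : ℂ) := by
      norm_cast
      field_simp
      rw [Int.cast_negSucc]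
      push_cast
      ring
    have hne : ((2 * x : ℝ) : ℂ) ≠ 0 := by
      exact_mod_cast ne_of_gt (by positivity : (0:ℝ) < 2 * x)
    simp only [hsq]
    rw [hphase]
    rw [abs_of_pos (by positivity : (0:ℝ) < 2 * x), Complex.real_smul, smul_eq_mul, K]
    have hxne : (x : ℂ) ≠ 0 := by exact_mod_cast hx.ne'
    field_simp
  rw [setIntegral_congr_fun measurableSet_Ioi h2]
  have hKgneg : Integrable (fun x : ℝ => K c x * g₀ (-x)) := by
    refine ((hKg c).comp_neg).congr (Eventually.of_forall fun x => ?_)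
    simp [K_neg]
  rw [integral_add ((hKg c).integrableOn) (hKgneg.integrableOn)]
  have hneg : (∫ x in Set.Ioi (0:ℝ), K c x * g₀ (-x)) = ∫ x in Set.Iic (0:ℝ), K c x * g₀ x := by
    have h := integral_comp_neg_Ioi (0:ℝ) (fun y => K c y * g₀ y)
    simp only [K_neg, neg_zero] at h
    exact h
  rw [hneg, add_comm, intervalIntegral.integral_Iic_add_Ioi ((hKg c).integrableOn) ((hKg c).integrableOn)]

end Stmt12Aux

open Stmt12Aux

/-- for Schwartz `V` on ℝ², `V(t,p₁,p₂) = e^{−it(p₁⁴+3p₂²)/p₁} V(p₁,p₂)`,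
fixed `t ≠ 0` and a Schwartz test function `ψ` of one variable, the smeared function
`p₁ ↦ ∫ V(t,p₁,p₂) ψ(p₂) dp₂` tends to `0` as `p₁ → 0` (through `p₁ ≠ 0`). -/
theorem stmt12 (V : SchwartzMap (ℝ × ℝ) ℂ) (ψ : SchwartzMap ℝ ℂ) (t : ℝ) (ht : t ≠ 0) :
    Tendsto (fun p₁ : ℝ => ∫ p₂ : ℝ,
        Complex.exp (-Complex.I * ((t * (p₁ ^ 4 + 3 * p₂ ^ 2) / p₁ : ℝ) : ℂ)) *
          V (p₁, p₂) * ψ p₂)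
      (nhdsWithin 0 {x : ℝ | x ≠ 0}) (nhds 0) := by
  classical
  obtain ⟨C, hC⟩ : ∃ C : ℝ, ∀ x : ℝ × ℝ, ‖V x‖ ≤ C :=
    ⟨_, fun x => by simpa using V.norm_pow_mul_le_seminorm ℝ 0 x⟩
  set g₀ : ℝ → ℂ := fun p => V (0, p) * ψ p with hg₀def
  have hψi : Integrable (fun p : ℝ => ψ p) := ψ.integrable
  have hVcont : ∀ p₁ : ℝ, Continuous fun p : ℝ => (V (p₁, p) : ℂ) := fun p₁ =>
    V.continuous.comp (continuous_const.prodMk continuous_id)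
  have hKV : ∀ (c p₁ : ℝ), Integrable fun p : ℝ => K c p * (V (p₁, p) * ψ p) := by
    intro c p₁
    have h : Integrable fun p : ℝ => (K c p * V (p₁, p)) * ψ p := by
      refine hψi.bdd_mul (((continuous_K c).mul (hVcont p₁)).aestronglyMeasurable) (c := C) (Eventually.of_forall fun p => ?_)
      rw [norm_mul, norm_K, one_mul]
      exact hC _
    simpa [mul_assoc] using h
  have hKg : ∀ c : ℝ, Integrable fun p : ℝ => K c p * g₀ p := fun c => hKV c 0
  -- the L¹-difference term
  have hd0 : Tendsto (fun p₁ : ℝ => ∫ p : ℝ, ‖V (p₁, p) - V (0, p)‖ * ‖ψ p‖)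
      (nhdsWithin 0 {x : ℝ | x ≠ 0}) (nhds 0) := by
    have h := tendsto_integral_filter_of_dominated_convergence (μ := volume)
      (l := nhdsWithin (0:ℝ) {x : ℝ | x ≠ 0})
      (F := fun p₁ p => ‖V (p₁, p) - V (0, p)‖ * ‖ψ p‖) (f := fun _ => (0:ℝ))
      (bound := fun p => (2 * C) * ‖ψ p‖)
      (Eventually.of_forall fun p₁ =>
        (((hVcont p₁).sub (hVcont 0)).norm.mul ψ.continuous.norm).aestronglyMeasurable)
      (Eventually.of_forall fun p₁ => Eventually.of_forall fun p => by
        rw [Real.norm_of_nonneg (by positivity)]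
        have h1 : ‖V (p₁, p) - V (0, p)‖ ≤ 2 * C := by
          calc ‖V (p₁, p) - V (0, p)‖ ≤ ‖V (p₁, p)‖ + ‖V (0, p)‖ := norm_sub_le _ _
          _ ≤ 2 * C := by have := hC (p₁, p); have := hC (0, p); linarith
        exact mul_le_mul_of_nonneg_right h1 (norm_nonneg _))
      ((hψi.norm.const_mul (2 * C)))
      (Eventually.of_forall fun p => by
        have hco : Tendsto (fun p₁ : ℝ => V (p₁, p)) (nhds (0:ℝ)) (nhds (V (0, p))) := by
          have : Continuous fun p₁ : ℝ => V (p₁, p) :=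
            V.continuous.comp (continuous_id.prodMk continuous_const)
          exact this.tendsto 0
        have h5 : Tendsto (fun p₁ : ℝ => ‖V (p₁, p) - V (0, p)‖ * ‖ψ p‖) (nhds (0:ℝ))
            (nhds (‖V (0, p) - V (0, p)‖ * ‖ψ p‖)) :=
          ((hco.sub (tendsto_const_nhds : Tendsto (fun _ : ℝ => V (0, p)) (nhds 0)
            (nhds (V (0, p))))).norm.mul_const ‖ψ p‖)
        simpa using h5.mono_left nhdsWithin_le_nhds)
    simpa using h
  -- the Riemann–Lebesgue term
  have hc : Tendsto (fun p₁ : ℝ => (3 * t / p₁) / (2 * π))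
      (nhdsWithin 0 {x : ℝ | x ≠ 0}) (Filter.cocompact ℝ) := by
    rw [← Metric.cobounded_eq_cocompact, ← tendsto_norm_atTop_iff_cobounded]
    have h1 : Tendsto (fun p₁ : ℝ => |p₁|⁻¹) (nhdsWithin 0 {x : ℝ | x ≠ 0}) atTop :=
      tendsto_inv_nhdsGT_zero.comp tendsto_abs_nhdsNE_zero
    have h2 : Tendsto (fun p₁ : ℝ => (|3 * t| / |2 * π|) * |p₁|⁻¹)
        (nhdsWithin 0 {x : ℝ | x ≠ 0}) atTop := by
      refine Tendsto.const_mul_atTop ?_ h1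
      have h3 : (0:ℝ) < |3 * t| := abs_pos.mpr (by simp [ht])
      have h4 : (0:ℝ) < |2 * π| := abs_pos.mpr (by positivity)
      positivity
    refine h2.congr fun p₁ => ?_
    rw [Real.norm_eq_abs, abs_div, abs_div]
    ring
  have hRL : Tendsto (fun p₁ : ℝ =>
      ‖FourierTransform.fourier (h₀ g₀) ((3 * t / p₁) / (2 * π))‖)
      (nhdsWithin 0 {x : ℝ | x ≠ 0}) (nhds 0) := by
    have := ((Real.zero_at_infty_fourier (h₀ g₀)).comp hc).norm
    simpa using this
  -- squeeze
  refine squeeze_zero_norm' ?_ (by simpa only [add_zero] using hd0.add hRL)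
  filter_upwards [self_mem_nhdsWithin] with p₁ hp₁
  have hp₁' : p₁ ≠ 0 := hp₁
  set c : ℝ := 3 * t / p₁ with hcdef
  -- rewrite the integral
  have key : (∫ p₂ : ℝ,
        Complex.exp (-Complex.I * ((t * (p₁ ^ 4 + 3 * p₂ ^ 2) / p₁ : ℝ) : ℂ)) *
          V (p₁, p₂) * ψ p₂)
      = Complex.exp (-Complex.I * ((t * p₁ ^ 3 : ℝ) : ℂ)) *
        ∫ p : ℝ, K c p * (V (p₁, p) * ψ p) := by
    rw [← integral_const_mul]
    refine integral_congr_ae (Eventually.of_forall fun p => ?_)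
    beta_reduce
    have hsplit : (t * (p₁ ^ 4 + 3 * p ^ 2) / p₁ : ℝ) = t * p₁ ^ 3 + c * p ^ 2 := by
      rw [hcdef]
      field_simp
    have hexp : Complex.exp (-Complex.I * ((t * (p₁ ^ 4 + 3 * p ^ 2) / p₁ : ℝ) : ℂ))
        = Complex.exp (-Complex.I * ((t * p₁ ^ 3 : ℝ) : ℂ)) * K c p := by
      rw [K, ← Complex.exp_add]
      congr 1
      rw [hsplit]
      push_cast
      ring
    rw [hexp]
    ring
  rw [key, norm_mul]
  have hnorm1 : ‖Complex.exp (-Complex.I * ((t * p₁ ^ 3 : ℝ) : ℂ))‖ = 1 := by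
    rw [show (-Complex.I * ((t * p₁ ^ 3 : ℝ) : ℂ)) = ((-(t * p₁ ^ 3) : ℝ) : ℂ) * Complex.I by
      push_cast; ring]
    exact Complex.norm_exp_ofReal_mul_I _
  rw [hnorm1, one_mul]
  -- split off g₀
  have hsub : (∫ p : ℝ, K c p * (V (p₁, p) * ψ p))
      = (∫ p : ℝ, (K c p * (V (p₁, p) * ψ p) - K c p * g₀ p)) + ∫ p : ℝ, K c p * g₀ p := by
    rw [integral_sub (hKV c p₁) (hKg c)]
    ring
  rw [hsub]
  refine le_trans (norm_add_le _ _) (add_le_add ?_ ?_)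
  · refine le_trans (norm_integral_le_integral_norm _) (le_of_eq ?_)
    refine integral_congr_ae (Eventually.of_forall fun p => ?_)
    show ‖K c p * (V (p₁, p) * ψ p) - K c p * g₀ p‖ = ‖V (p₁, p) - V (0, p)‖ * ‖ψ p‖
    have heq : K c p * (V (p₁, p) * ψ p) - K c p * g₀ p
        = K c p * ((V (p₁, p) - V (0, p)) * ψ p) := by
      show K c p * (V (p₁, p) * ψ p) - K c p * (V (0, p) * ψ p) = _
      ring
    rw [heq, norm_mul, norm_K, one_mul, norm_mul]
  · rw [← Stmt12Aux.fourier_eq g₀ hKg c]
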